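/- Let s be a positive integer, let K be a complex Hadamard matrix of order s+1 that is normalized (all entries of its first row equal 1), and let T be the s×(s+1) matrix consisting of the s noninitial rows of K. Let X, Y be s×s complex matrices and D an (s+1)×(s+1) complex matrix, all with unimodular entries. Then the system of equations (i) 2 T* T + D D* = (3s+1) I_{s+1}, (ii) X X* + Y Y* + T T* = (3s+1) I_s, (iii) (X + Y) T + T D* = 0, (iv) X Y* + Y X* + T T* = 0 holds if and only if the following system holds: (I) D D* = D* D = (s−1) I_{s+1} + 2 J_{s+1}; (II) D J_{s+1} = J_{s+1} D; (III) X + Y = −(1/(s+1)) T D* T*; (IV) (X − Y)(X − Y)* = (3s+1) I_s, where J_{s+1} denotes the all-ones matrix of order s+1. -/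

import Mathlib

open Matrix

/-- The `m × m` all-ones matrix. -/
def allOnes (m : ℕ) : Matrix (Fin m) (Fin m) ℂ := Matrix.of fun _ _ => 1

lemma eq_zero_of_trace_mul_conjTranspose {m n : ℕ}
    (A : Matrix (Fin m) (Fin n) ℂ) (h : (A * Aᴴ).trace = 0) : A = 0 := by
  have h' : ∑ i, ∑ j, Complex.normSq (A i j) = 0 := by
    have : (A * Aᴴ).trace = ((∑ i, ∑ j, Complex.normSq (A i j) : ℝ) : ℂ) := by
      simp [Matrix.trace, Matrix.diag, Matrix.mul_apply, Matrix.conjTranspose_apply,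
        Complex.mul_conj]
    rw [this] at h
    exact_mod_cast h
  ext i j
  have h1 : ∀ i ∈ Finset.univ, (0:ℝ) ≤ ∑ j, Complex.normSq (A i j) :=
    fun i _ => Finset.sum_nonneg fun j _ => Complex.normSq_nonneg _
  have h2 := (Finset.sum_eq_zero_iff_of_nonneg h1).mp h'
  have h3 : ∀ j ∈ Finset.univ, (0:ℝ) ≤ Complex.normSq (A i j) :=
    fun j _ => Complex.normSq_nonneg _
  have h4 := (Finset.sum_eq_zero_iff_of_nonneg h3).mp (h2 i (Finset.mem_univ i)) j (Finset.mem_univ j)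
  simpa using Complex.normSq_eq_zero.mp h4

lemma allOnes_conjTranspose (m : ℕ) : (allOnes m)ᴴ = allOnes m := by
  ext i j; simp [allOnes]

lemma allOnes_mul_allOnes (m : ℕ) : allOnes m * allOnes m = (m : ℂ) • allOnes m := by
  ext i j; simp [allOnes, Matrix.mul_apply]

lemma allOnes_sandwich (m : ℕ) (A : Matrix (Fin m) (Fin m) ℂ) :
    allOnes m * A * allOnes m = (A * allOnes m).trace • allOnes m := by
  ext i j
  simp only [allOnes, Matrix.mul_apply, Matrix.trace, Matrix.diag, Matrix.smul_apply,
    Matrix.of_apply, mul_one, one_mul, smul_eq_mul]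
  exact Finset.sum_comm

section
variable (s : ℕ)
  (K : Matrix (Fin (s + 1)) (Fin (s + 1)) ℂ)
  (T : Matrix (Fin s) (Fin (s + 1)) ℂ)

lemma TmulTH (hKhad : K * Kᴴ = ((s + 1 : ℕ) : ℂ) • 1)
    (hT : ∀ (i : Fin s) (j : Fin (s + 1)), T i j = K i.succ j) :
    T * Tᴴ = ((s + 1 : ℕ) : ℂ) • 1 := by
  ext i j
  have h := congrFun (congrFun hKhad i.succ) j.succ
  simp only [Matrix.mul_apply, Matrix.conjTranspose_apply, Matrix.smul_apply,
    Matrix.one_apply, smul_eq_mul] at h ⊢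
  simp only [hT]
  rw [h]
  simp [Fin.succ_inj]

lemma THmulT (hKhad : K * Kᴴ = ((s + 1 : ℕ) : ℂ) • 1)
    (hKnorm : ∀ j, K 0 j = 1)
    (hT : ∀ (i : Fin s) (j : Fin (s + 1)), T i j = K i.succ j) :
    Tᴴ * T = ((s + 1 : ℕ) : ℂ) • 1 - allOnes (s + 1) := by
  have hKK : Kᴴ * K = ((s + 1 : ℕ) : ℂ) • 1 := by
    have hne : ((s + 1 : ℕ) : ℂ) ≠ 0 := Nat.cast_ne_zero.mpr (Nat.succ_ne_zero s)
    have h1 : K * (((s + 1 : ℕ) : ℂ)⁻¹ • Kᴴ) = 1 := by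
      rw [Matrix.mul_smul, hKhad, smul_smul, inv_mul_cancel₀ hne, one_smul]
    have h2 := mul_eq_one_comm.mp h1
    rw [Matrix.smul_mul] at h2
    calc Kᴴ * K = ((s + 1 : ℕ) : ℂ) • (((s + 1 : ℕ) : ℂ)⁻¹ • (Kᴴ * K)) := by
          rw [smul_smul, mul_inv_cancel₀ hne, one_smul]
      _ = ((s + 1 : ℕ) : ℂ) • 1 := by rw [h2]
  ext i j
  have h := congrFun (congrFun hKK i) j
  simp only [Matrix.mul_apply, Matrix.conjTranspose_apply] at h
  rw [Fin.sum_univ_succ] at h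
  simp only [hKnorm, star_one, one_mul] at h
  simp only [Matrix.mul_apply, Matrix.conjTranspose_apply, Matrix.sub_apply, hT, allOnes,
    Matrix.of_apply]
  linear_combination h

lemma TmulJ (hKhad : K * Kᴴ = ((s + 1 : ℕ) : ℂ) • 1)
    (hKnorm : ∀ j, K 0 j = 1)
    (hT : ∀ (i : Fin s) (j : Fin (s + 1)), T i j = K i.succ j) :
    T * allOnes (s + 1) = 0 := by
  ext i j
  have h := congrFun (congrFun hKhad i.succ) 0
  simp only [Matrix.mul_apply, Matrix.conjTranspose_apply, hKnorm, star_one, mul_one,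
    Matrix.smul_apply, Matrix.one_apply, smul_eq_mul] at h
  rw [if_neg (Fin.succ_ne_zero i)] at h
  simp only [Matrix.mul_apply, allOnes, Matrix.of_apply, mul_one, hT, Matrix.zero_apply]
  simpa using h

lemma traceDHD (D : Matrix (Fin (s+1)) (Fin (s+1)) ℂ)
    (hD : ∀ i j, ‖D i j‖ = 1) :
    (Dᴴ * D).trace = ((s+1 : ℕ) : ℂ) ^ 2 := by
  simp only [Matrix.trace, Matrix.diag, Matrix.mul_apply, Matrix.conjTranspose_apply]
  have h1 : ∀ i j : Fin (s+1), star (D j i) * D j i = 1 := by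
    intro i j
    rw [Complex.star_def, mul_comm, Complex.mul_conj]
    norm_cast
    rw [← Complex.sq_norm, hD]; norm_num
  simp only [h1, Finset.sum_const, Finset.card_univ, Fintype.card_fin, nsmul_eq_mul, mul_one]
  push_cast
  ring

end

/-- For `T` the noninitial rows of a normalized complex Hadamard matrix of order `s+1`,
and unimodular matrices `X, Y, D`, Petrescu's orthogonality system (i)–(iv) is
equivalent to the transformed system (I)–(IV). -/
theorem petrescu_system_equiv (s : ℕ) (hs : 0 < s)
    (K : Matrix (Fin (s + 1)) (Fin (s + 1)) ℂ)
    (hKuni : ∀ i j, ‖K i j‖ = 1)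
    (hKhad : K * Kᴴ = ((s + 1 : ℕ) : ℂ) • 1)
    (hKnorm : ∀ j, K 0 j = 1)
    (T : Matrix (Fin s) (Fin (s + 1)) ℂ)
    (hT : ∀ (i : Fin s) (j : Fin (s + 1)), T i j = K i.succ j)
    (X Y : Matrix (Fin s) (Fin s) ℂ)
    (D : Matrix (Fin (s + 1)) (Fin (s + 1)) ℂ)
    (hX : ∀ i j, ‖X i j‖ = 1)
    (hY : ∀ i j, ‖Y i j‖ = 1)
    (hD : ∀ i j, ‖D i j‖ = 1) :
    ((2 : ℂ) • (Tᴴ * T) + D * Dᴴ = ((3 * s + 1 : ℕ) : ℂ) • 1 ∧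
      X * Xᴴ + Y * Yᴴ + T * Tᴴ = ((3 * s + 1 : ℕ) : ℂ) • 1 ∧
      (X + Y) * T + T * Dᴴ = 0 ∧
      X * Yᴴ + Y * Xᴴ + T * Tᴴ = 0) ↔
    ((D * Dᴴ = ((s : ℂ) - 1) • 1 + (2 : ℂ) • allOnes (s + 1) ∧
        Dᴴ * D = ((s : ℂ) - 1) • 1 + (2 : ℂ) • allOnes (s + 1)) ∧
      D * allOnes (s + 1) = allOnes (s + 1) * D ∧
      X + Y = -(((s : ℂ) + 1)⁻¹ • (T * Dᴴ * Tᴴ)) ∧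
      (X - Y) * (X - Y)ᴴ = ((3 * s + 1 : ℕ) : ℂ) • 1) := by
  set J := allOnes (s + 1) with hJdef
  have hcast1 : ((s + 1 : ℕ) : ℂ) = (s : ℂ) + 1 := by push_cast; ring
  have hcast3 : ((3 * s + 1 : ℕ) : ℂ) = 3 * (s : ℂ) + 1 := by push_cast; ring
  have hne : (s : ℂ) + 1 ≠ 0 := by
    rw [← hcast1]; exact Nat.cast_ne_zero.mpr (Nat.succ_ne_zero s)
  have h3ne : 3 * (s : ℂ) + 1 ≠ 0 := by
    rw [← hcast3]; exact Nat.cast_ne_zero.mpr (by omega)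
  have hTT : T * Tᴴ = ((s : ℂ) + 1) • 1 := by rw [← hcast1]; exact TmulTH s K T hKhad hT
  have hThT : Tᴴ * T = ((s : ℂ) + 1) • 1 - J := by
    rw [← hcast1]; exact THmulT s K T hKhad hKnorm hT
  have hTJ : T * J = 0 := TmulJ s K T hKhad hKnorm hT
  have hJT : J * Tᴴ = 0 := by
    have := congrArg conjTranspose hTJ
    rwa [Matrix.conjTranspose_mul, hJdef, allOnes_conjTranspose, Matrix.conjTranspose_zero]
      at this
  have hJJ : J * J = ((s : ℂ) + 1) • J := by
    rw [hJdef, allOnes_mul_allOnes]; norm_num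
  have hJH : Jᴴ = J := allOnes_conjTranspose (s + 1)
  have htrJ : J.trace = (s : ℂ) + 1 := by
    simp [hJdef, allOnes, Matrix.trace, Matrix.diag]
  have htrM : (Dᴴ * D).trace = ((s : ℂ) + 1) ^ 2 := by
    rw [← hcast1]; exact traceDHD s D hD
  constructor
  · rintro ⟨h1, h2, h3, h4⟩
    -- (I) part 1
    have hN : D * Dᴴ = ((s : ℂ) - 1) • 1 + (2 : ℂ) • J := by
      rw [hThT] at h1
      have h1' := eq_sub_of_add_eq' h1
      rw [h1', hcast3]
      module
    have h3' : T * Dᴴ = -((X + Y) * T) := eq_neg_of_add_eq_zero_right h3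
    have h3'' : (X + Y) * T = -(T * Dᴴ) := eq_neg_of_add_eq_zero_left h3
    have hQ : T * Dᴴ * J = 0 := by
      rw [h3', Matrix.neg_mul, Matrix.mul_assoc, hTJ, Matrix.mul_zero, neg_zero]
    have hQ' : T * (Dᴴ * J) = 0 := by rw [← Matrix.mul_assoc]; exact hQ
    set lam : ℂ := ((s : ℂ) + 1)⁻¹ * (Dᴴ * J).trace with hlamdef
    have he : Dᴴ * J = lam • J := by
      have e1 : ((s : ℂ) + 1) • (Dᴴ * J) = (Dᴴ * J).trace • J := by
        calc ((s : ℂ) + 1) • (Dᴴ * J) = (((s : ℂ) + 1) • 1) * (Dᴴ * J) := by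
              rw [Matrix.smul_mul, Matrix.one_mul]
          _ = (Tᴴ * T + J) * (Dᴴ * J) := by rw [hThT, sub_add_cancel]
          _ = Tᴴ * (T * (Dᴴ * J)) + J * (Dᴴ * J) := by
              rw [Matrix.add_mul, Matrix.mul_assoc]
          _ = J * Dᴴ * J := by rw [hQ', Matrix.mul_zero, zero_add, Matrix.mul_assoc]
          _ = (Dᴴ * J).trace • J := by rw [hJdef]; exact allOnes_sandwich _ _
      calc Dᴴ * J = ((s : ℂ) + 1)⁻¹ • (((s : ℂ) + 1) • (Dᴴ * J)) := by
            rw [smul_smul, inv_mul_cancel₀ hne, one_smul]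
        _ = lam • J := by rw [e1, smul_smul, hlamdef]
    have hJD : J * D = (star lam) • J := by
      have := congrArg conjTranspose he
      rwa [Matrix.conjTranspose_mul, Matrix.conjTranspose_smul, hJH,
        Matrix.conjTranspose_conjTranspose] at this
    have hNJ : D * Dᴴ * J = (3 * (s : ℂ) + 1) • J := by
      rw [hN, Matrix.add_mul, Matrix.smul_mul, Matrix.smul_mul, Matrix.one_mul, hJJ]
      module
    have hA : lam • (D * J) = (3 * (s : ℂ) + 1) • J := by
      rw [← hNJ, Matrix.mul_assoc, he, Matrix.mul_smul]
    have hlamstar : lam * star lam = 3 * (s : ℂ) + 1 := by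
      have w1 : J * (D * J) = (star lam * ((s : ℂ) + 1)) • J := by
        rw [← Matrix.mul_assoc, hJD, Matrix.smul_mul, hJJ, smul_smul]
      have w2 := congrArg (fun M => J * M) hA
      simp only [Matrix.mul_smul] at w2
      rw [w1, hJJ, smul_smul, smul_smul] at w2
      have e3 := congrFun (congrFun w2 0) 0
      simp only [Matrix.smul_apply, hJdef, allOnes, Matrix.of_apply, smul_eq_mul, mul_one] at e3
      have e4 : (lam * star lam) * ((s : ℂ) + 1) = (3 * (s : ℂ) + 1) * ((s : ℂ) + 1) := by
        linear_combination e3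
      exact mul_right_cancel₀ hne e4
    have hlamne : lam ≠ 0 := by
      intro h0
      exact h3ne (by rw [← hlamstar, h0, zero_mul])
    have hDJ : D * J = star lam • J := by
      have hinj := smul_right_injective (Matrix (Fin (s+1)) (Fin (s+1)) ℂ) hlamne
      apply hinj
      show lam • (D * J) = lam • (star lam • J)
      rw [hA, smul_smul, hlamstar]
    have hII : D * J = J * D := by rw [hDJ, hJD]
    have hJDh : J * Dᴴ = lam • J := by
      have := congrArg conjTranspose hDJ
      rwa [Matrix.conjTranspose_mul, hJH, Matrix.conjTranspose_smul, star_star, hJH] at this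
    have hDJD : Dᴴ * J * D = (3 * (s : ℂ) + 1) • J := by
      rw [he, Matrix.smul_mul, hJD, smul_smul, hlamstar]
    have hMJ : Dᴴ * D * J = (3 * (s : ℂ) + 1) • J := by
      rw [Matrix.mul_assoc, hDJ, Matrix.mul_smul, he, smul_smul, mul_comm (star lam) lam,
        hlamstar]
    have hJM : J * (Dᴴ * D) = (3 * (s : ℂ) + 1) • J := by
      rw [← Matrix.mul_assoc, hJDh, Matrix.smul_mul, hJD, smul_smul, hlamstar]
    have hMM : Dᴴ * D * (Dᴴ * D) = ((s : ℂ) - 1) • (Dᴴ * D) + (2 * (3 * (s : ℂ) + 1)) • J := by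
      calc Dᴴ * D * (Dᴴ * D) = Dᴴ * (D * Dᴴ) * D := by
            simp only [Matrix.mul_assoc]
        _ = Dᴴ * (((s : ℂ) - 1) • 1 + (2 : ℂ) • J) * D := by rw [hN]
        _ = ((s : ℂ) - 1) • (Dᴴ * D) + (2 : ℂ) • (Dᴴ * J * D) := by
            simp only [Matrix.mul_add, Matrix.add_mul, Matrix.mul_smul, Matrix.smul_mul,
              Matrix.mul_one]
        _ = ((s : ℂ) - 1) • (Dᴴ * D) + (2 * (3 * (s : ℂ) + 1)) • J := by
            rw [hDJD, smul_smul]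
    set M0 := Dᴴ * D - ((s : ℂ) - 1) • 1 - (2 : ℂ) • J with hM0
    have hM0H : M0ᴴ = M0 := by
      rw [hM0]
      simp only [Matrix.conjTranspose_sub, Matrix.conjTranspose_smul,
        Matrix.conjTranspose_mul, Matrix.conjTranspose_conjTranspose,
        Matrix.conjTranspose_one, hJH, Complex.star_def, map_sub, map_ofNat,
        Complex.conj_natCast, _root_.map_one]
    have hM0sq : M0 * M0 = (-((s : ℂ) - 1)) • M0 := by
      rw [hM0]
      simp only [Matrix.sub_mul, Matrix.mul_sub, Matrix.smul_mul, Matrix.mul_smul,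
        Matrix.one_mul, Matrix.mul_one, smul_smul]
      rw [hMM, hMJ, hJM, hJJ]
      module
    have htr0 : M0.trace = 0 := by
      rw [hM0]
      simp only [Matrix.trace_sub, Matrix.trace_smul, Matrix.trace_one, htrM, htrJ,
        Finset.card_univ, Fintype.card_fin, smul_eq_mul]
      push_cast
      ring
    have htrsq : (M0 * M0ᴴ).trace = 0 := by
      rw [hM0H, hM0sq, Matrix.trace_smul, htr0, smul_zero]
    have hM0z : M0 = 0 := eq_zero_of_trace_mul_conjTranspose _ htrsq
    have hI2 : Dᴴ * D = ((s : ℂ) - 1) • 1 + (2 : ℂ) • J := by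
      rw [hM0, sub_sub, sub_eq_zero] at hM0z
      exact hM0z
    have hIII : X + Y = -(((s : ℂ) + 1)⁻¹ • (T * Dᴴ * Tᴴ)) := by
      have e : ((s : ℂ) + 1) • (X + Y) = -(T * Dᴴ * Tᴴ) := by
        calc ((s : ℂ) + 1) • (X + Y) = (X + Y) * (T * Tᴴ) := by
              rw [hTT, Matrix.mul_smul, Matrix.mul_one]
          _ = ((X + Y) * T) * Tᴴ := by rw [Matrix.mul_assoc]
          _ = -(T * Dᴴ * Tᴴ) := by rw [h3'', Matrix.neg_mul]
      calc X + Y = ((s : ℂ) + 1)⁻¹ • (((s : ℂ) + 1) • (X + Y)) := by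
            rw [smul_smul, inv_mul_cancel₀ hne, one_smul]
        _ = -(((s : ℂ) + 1)⁻¹ • (T * Dᴴ * Tᴴ)) := by rw [e, smul_neg]
    refine ⟨⟨hN, hI2⟩, hII, hIII, ?_⟩
    have expand : (X - Y) * (X - Y)ᴴ =
        (X * Xᴴ + Y * Yᴴ + T * Tᴴ) - (X * Yᴴ + Y * Xᴴ + T * Tᴴ) := by
      rw [Matrix.conjTranspose_sub]
      simp only [Matrix.sub_mul, Matrix.mul_sub]
      abel
    rw [expand, h2, h4, sub_zero]
  · rintro ⟨⟨hI1, hI2⟩, hII, hIII, hIV⟩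
    have hDHJ : Dᴴ * J = J * Dᴴ := by
      have := congrArg conjTranspose hII
      rw [Matrix.conjTranspose_mul, Matrix.conjTranspose_mul, hJH] at this
      exact this.symm
    have hTDJ : T * Dᴴ * J = 0 := by
      rw [Matrix.mul_assoc, hDHJ, ← Matrix.mul_assoc, hTJ, Matrix.zero_mul]
    have key : (T * Dᴴ * Tᴴ) * T = ((s : ℂ) + 1) • (T * Dᴴ) := by
      rw [Matrix.mul_assoc (T * Dᴴ), hThT, Matrix.mul_sub, Matrix.mul_smul, Matrix.mul_one,
        hTDJ, sub_zero]
    have g3 : (X + Y) * T + T * Dᴴ = 0 := by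
      rw [hIII, Matrix.neg_mul, Matrix.smul_mul, key, smul_smul, inv_mul_cancel₀ hne,
        one_smul, neg_add_cancel]
    have g1 : (2 : ℂ) • (Tᴴ * T) + D * Dᴴ = ((3 * s + 1 : ℕ) : ℂ) • 1 := by
      rw [hThT, hI1, hcast3]
      module
    have hDJD : Dᴴ * J * D = (3 * (s : ℂ) + 1) • J := by
      rw [Matrix.mul_assoc, ← hII, ← Matrix.mul_assoc, hI2, Matrix.add_mul, Matrix.smul_mul,
        Matrix.smul_mul, Matrix.one_mul, hJJ]
      module
    have hBH : (T * Dᴴ * Tᴴ)ᴴ = T * D * Tᴴ := by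
      simp only [Matrix.conjTranspose_mul, Matrix.conjTranspose_conjTranspose,
        Matrix.mul_assoc]
    have hBB : (T * Dᴴ * Tᴴ) * (T * D * Tᴴ) = (((s : ℂ) + 1) * ((s : ℂ) + 1) * ((s : ℂ) - 1)) • (1 : Matrix (Fin s) (Fin s) ℂ) := by
      have step1 : (T * Dᴴ * Tᴴ) * (T * D * Tᴴ) = (T * Dᴴ) * (Tᴴ * T) * (D * Tᴴ) := by
        simp only [Matrix.mul_assoc]
      rw [step1, hThT, Matrix.mul_sub, Matrix.sub_mul, Matrix.mul_smul, Matrix.mul_one]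
      have e1 : (T * Dᴴ) * (D * Tᴴ) = (((s : ℂ) + 1) * ((s : ℂ) - 1)) • (1 : Matrix (Fin s) (Fin s) ℂ) := by
        have : (T * Dᴴ) * (D * Tᴴ) = T * (Dᴴ * D) * Tᴴ := by simp only [Matrix.mul_assoc]
        rw [this, hI2, Matrix.mul_add, Matrix.mul_smul, Matrix.mul_one, Matrix.mul_smul,
          hTJ, smul_zero, add_zero, Matrix.smul_mul, hTT, smul_smul]
        module
      have e2 : (T * Dᴴ * J) * (D * Tᴴ) = 0 := by
        rw [hTDJ, Matrix.zero_mul]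
      rw [Matrix.smul_mul, e1, e2, sub_zero, smul_smul]
      module
    have hS : (X + Y) * (X + Y)ᴴ = ((s : ℂ) - 1) • 1 := by
      rw [hIII, Matrix.conjTranspose_neg, Matrix.conjTranspose_smul, neg_mul_neg,
        Matrix.smul_mul, Matrix.mul_smul, hBH, hBB, smul_smul, smul_smul]
      congr 1
      have hstar : star (((s : ℂ) + 1)⁻¹) = ((s : ℂ) + 1)⁻¹ := by
        simp [Complex.star_def, map_inv₀, Complex.conj_natCast]
      rw [hstar]
      try field_simp
      try ring
    have key3 : (X + Y) * (X + Y)ᴴ + (X - Y) * (X - Y)ᴴ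
        = (2 : ℂ) • (X * Xᴴ) + (2 : ℂ) • (Y * Yᴴ) := by
      rw [Matrix.conjTranspose_add, Matrix.conjTranspose_sub]
      simp only [Matrix.add_mul, Matrix.mul_add, Matrix.sub_mul, Matrix.mul_sub]
      module
    have key4 : (X + Y) * (X + Y)ᴴ - (X - Y) * (X - Y)ᴴ
        = (2 : ℂ) • (X * Yᴴ) + (2 : ℂ) • (Y * Xᴴ) := by
      rw [Matrix.conjTranspose_add, Matrix.conjTranspose_sub]
      simp only [Matrix.add_mul, Matrix.mul_add, Matrix.sub_mul, Matrix.mul_sub]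
      module
    have htwo : (2 : ℂ) ≠ 0 := two_ne_zero
    have g2 : X * Xᴴ + Y * Yᴴ + T * Tᴴ = ((3 * s + 1 : ℕ) : ℂ) • 1 := by
      apply smul_right_injective (Matrix (Fin s) (Fin s) ℂ) htwo
      show (2 : ℂ) • (X * Xᴴ + Y * Yᴴ + T * Tᴴ) = (2 : ℂ) • (((3 * s + 1 : ℕ) : ℂ) • 1)
      have : (2 : ℂ) • (X * Xᴴ + Y * Yᴴ + T * Tᴴ)
          = ((X + Y) * (X + Y)ᴴ + (X - Y) * (X - Y)ᴴ) + (2 : ℂ) • (T * Tᴴ) := by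
        rw [key3]; module
      rw [this, hS, hIV, hTT, hcast3]
      module
    have g4 : X * Yᴴ + Y * Xᴴ + T * Tᴴ = 0 := by
      apply smul_right_injective (Matrix (Fin s) (Fin s) ℂ) htwo
      show (2 : ℂ) • (X * Yᴴ + Y * Xᴴ + T * Tᴴ) = (2 : ℂ) • (0 : Matrix (Fin s) (Fin s) ℂ)
      have : (2 : ℂ) • (X * Yᴴ + Y * Xᴴ + T * Tᴴ)
          = ((X + Y) * (X + Y)ᴴ - (X - Y) * (X - Y)ᴴ) + (2 : ℂ) • (T * Tᴴ) := by
        rw [key4]; module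
      rw [this, hS, hIV, hTT, hcast3]
      module
    exact ⟨g1, g2, g3, g4⟩
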